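/- Let n ≥ 2 and q ≥ 2 be integers and s ∈ [-1,1). Let f be a real polynomial of degree m with 0 ≤ m ≤ n such that: (A1) f(t) ≤ 0 for every t ∈ T_n ∩ [-1,s]; (A2) the coefficients in the Krawtchouk expansion f(t) = Σ_{i=0}^m f_i Q_i^{(n,q)}(t) satisfy f_0 > 0 and f_i ≥ 0 for every i. Then every code C ⊆ H(n,q) with s(C) ≤ s satisfies |C| ≤ f(1)/f_0. -/

import Mathlib

open Polynomial Finset Complex


/-- Generalized binomial coefficient `C(x,j) = x(x-1)⋯(x-j+1)/j!` as a function of a real `x`. -/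
noncomputable def genChoose (x : ℝ) (j : ℕ) : ℝ :=
  (descPochhammer ℝ j).eval x / (Nat.factorial j : ℝ)

/-- The `q`-ary Krawtchouk polynomial `K_i^{(n,q)}(x)`. -/
noncomputable def kraw (n q i : ℕ) (x : ℝ) : ℝ :=
  ∑ j ∈ Finset.range (i + 1),
    (-1 : ℝ) ^ j * ((q : ℝ) - 1) ^ (i - j) * genChoose x j * genChoose ((n : ℝ) - x) (i - j)

/-- The normalized Krawtchouk polynomial `Q_i^{(n,q)}(t) = K_i^{(n,q)}(n(1-t)/2)/r_i`,
with `r_i = (q-1)^i C(n,i)`. -/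
noncomputable def normKraw (n q i : ℕ) (t : ℝ) : ℝ :=
  kraw n q i ((n : ℝ) * (1 - t) / 2) / (((q : ℝ) - 1) ^ i * (n.choose i : ℝ))

/-- The linear programming (Delsarte) bound, Theorem 1 of the paper. -/
lemma genChoose_nat (k j : ℕ) : genChoose (k : ℝ) j = (k.choose j : ℝ) := by
  rw [genChoose, descPochhammer_eval_eq_descFactorial, Nat.descFactorial_eq_factorial_mul_choose]
  push_cast
  rw [mul_comm, mul_div_assoc, div_self (by positivity), mul_one]

lemma kraw_nat (n q i d : ℕ) (hd : d ≤ n) : kraw n q i (d : ℝ) =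
    ∑ j ∈ Finset.range (i + 1),
      (-1 : ℝ) ^ j * ((q : ℝ) - 1) ^ (i - j) * (d.choose j) * ((n - d).choose (i - j)) := by
  unfold kraw
  refine Finset.sum_congr rfl fun j _ => ?_
  have : (n : ℝ) - d = ((n - d : ℕ) : ℝ) := by push_cast [hd]; ring
  rw [this, genChoose_nat, genChoose_nat]

lemma kraw_zero (n q : ℕ) (x : ℝ) : kraw n q 0 x = 1 := by
  simp [kraw, genChoose]

lemma kraw_at_zero (n q i : ℕ) : kraw n q i 0 = ((q : ℝ) - 1) ^ i * (n.choose i : ℝ) := by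
  have h := kraw_nat n q i 0 (Nat.zero_le n)
  push_cast at h
  rw [h]
  rw [Finset.sum_eq_single 0]
  · simp
  · intro j hj hj0
    simp [Nat.choose_eq_zero_of_lt (Nat.pos_of_ne_zero hj0)]
  · simp

noncomputable def ww (q : ℕ) : ℂ := Complex.exp (2 * Real.pi * Complex.I / q)

lemma ww_ne_zero (q : ℕ) : ww q ≠ 0 := Complex.exp_ne_zero _

lemma ww_prim {q : ℕ} (hq : q ≠ 0) : IsPrimitiveRoot (ww q) q :=
  Complex.isPrimitiveRoot_exp q hq

/-- full character sum over the alphabet, zero when `q ∤ c`. -/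
lemma full_sum_eq_zero {q : ℕ} (hq : q ≠ 0) {c : ℤ} (hc : ¬ (q:ℤ) ∣ c) :
    ∑ a : Fin q, (ww q) ^ (((a : ℕ) : ℤ) * c) = 0 := by
  have hne : (ww q) ^ c ≠ 1 := by
    intro h
    exact hc (((ww_prim hq).zpow_eq_one_iff_dvd c).mp h)
  have hpow : ∀ a : Fin q, (ww q) ^ (((a : ℕ) : ℤ) * c) = ((ww q) ^ c) ^ (a : ℕ) := by
    intro a
    rw [mul_comm, zpow_mul, zpow_natCast]
  simp_rw [hpow]
  rw [Fin.sum_univ_eq_sum_range (fun k => ((ww q) ^ c) ^ k) q, geom_sum_eq hne]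
  have : ((ww q) ^ c) ^ q = 1 := by
    rw [← zpow_natCast, ← zpow_mul, mul_comm, zpow_mul, zpow_natCast,
      (ww_prim hq).pow_eq_one, one_zpow]
  rw [this, sub_self, zero_div]

noncomputable def gg (q : ℕ) (c : ℤ) : ℂ :=
  ∑ a ∈ Finset.univ.filter (fun a : Fin q => (a : ℕ) ≠ 0), (ww q) ^ (((a : ℕ) : ℤ) * c)

lemma filter_not_ne_zero (q : ℕ) (hq : q ≠ 0) :
    Finset.univ.filter (fun a : Fin q => ¬ (a : ℕ) ≠ 0) = {⟨0, Nat.pos_of_ne_zero hq⟩} := by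
  ext a
  simp only [Finset.mem_filter, Finset.mem_univ, true_and, not_not, Finset.mem_singleton]
  constructor
  · intro h; exact Fin.ext h
  · intro h; rw [h]

lemma gg_zero {q : ℕ} (hq : q ≠ 0) : gg q 0 = (q : ℂ) - 1 := by
  simp only [gg, mul_zero, zpow_zero]
  rw [Finset.sum_const, nsmul_eq_mul, mul_one]
  have : (Finset.univ.filter (fun a : Fin q => (a : ℕ) ≠ 0)).card = q - 1 := by
    have := Finset.card_filter_add_card_filter_not
      (s := (Finset.univ : Finset (Fin q))) (p := fun a : Fin q => (a : ℕ) ≠ 0)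
    rw [filter_not_ne_zero q hq, Finset.card_singleton, Finset.card_univ, Fintype.card_fin] at this
    omega
  rw [this]
  have hq1 : 1 ≤ q := Nat.one_le_iff_ne_zero.mpr hq
  push_cast [hq1]
  ring

lemma gg_neg_one {q : ℕ} (hq : q ≠ 0) {c : ℤ} (hc : ¬ (q:ℤ) ∣ c) : gg q c = -1 := by
  have h := full_sum_eq_zero hq hc
  rw [← Finset.sum_filter_add_sum_filter_not Finset.univ (fun a : Fin q => (a : ℕ) ≠ 0),
    filter_not_ne_zero q hq, Finset.sum_singleton] at h
  simp only [gg]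
  simp only [Fin.val_mk, Nat.cast_zero, zero_mul, zpow_zero] at h
  linear_combination h

lemma coeff_one_add_C_mul_X_pow (a : ℂ) (N i : ℕ) :
    ((1 + C a * X : ℂ[X]) ^ N).coeff i = a ^ i * (N.choose i : ℂ) := by
  rw [add_comm, add_pow]
  simp_rw [mul_pow, one_pow, mul_one, ← C_pow, ← Polynomial.C_eq_natCast, mul_assoc,
    Polynomial.X_pow_mul, ← mul_assoc, ← C_mul, Polynomial.finset_sum_coeff, coeff_C_mul, coeff_X_pow]
  simp_rw [mul_ite, mul_one, mul_zero, Finset.sum_ite_eq (Finset.range (N+1)) i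
    (fun k => a ^ k * (N.choose k : ℂ))]
  by_cases h : i ∈ Finset.range (N+1)
  · rw [if_pos h]
  · rw [if_neg h]
    rw [Finset.mem_range, not_lt] at h
    rw [Nat.choose_eq_zero_of_lt (by omega)]
    simp

lemma factor_eq (q : ℕ) (hq : q ≠ 0) (c : ℤ) :
    (1 + C (gg q c) * X : ℂ[X]) =
      ∑ a : Fin q, C ((ww q) ^ (((a : ℕ) : ℤ) * c)) * X ^ (if (a : ℕ) = 0 then 0 else 1) := by
  rw [← Finset.sum_filter_add_sum_filter_not Finset.univ (fun a : Fin q => (a : ℕ) ≠ 0)]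
  have h2 : Finset.univ.filter (fun a : Fin q => ¬ (a : ℕ) ≠ 0) = {⟨0, Nat.pos_of_ne_zero hq⟩} := by
    ext a
    simp only [Finset.mem_filter, Finset.mem_univ, true_and, not_not, Finset.mem_singleton]
    exact ⟨fun h => Fin.ext h, fun h => by rw [h]⟩
  rw [h2, Finset.sum_singleton]
  norm_num
  rw [add_comm]
  congr 1
  rw [gg, map_sum, Finset.sum_mul]
  refine Finset.sum_congr rfl fun a ha => ?_
  rw [Finset.mem_filter] at ha
  rw [if_neg ha.2]


lemma charSum (n q : ℕ) (hq0 : q ≠ 0) (x y : Fin n → Fin q) (i : ℕ) :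
    ∑ z ∈ Finset.univ.filter (fun z : Fin n → Fin q =>
        (Finset.univ.filter (fun j => (z j : ℕ) ≠ 0)).card = i),
      ∏ j, (ww q) ^ (((z j : ℕ) : ℤ) * (((x j : ℕ) : ℤ) - ((y j : ℕ) : ℤ)))
    = ((kraw n q i (hammingDist x y : ℕ) : ℝ) : ℂ) := by
  set d := hammingDist x y with hdd
  have hd : d ≤ n := by
    have := hammingDist_le_card_fintype (x := x) (y := y)
    simpa using this
  set c : Fin n → ℤ := fun j => ((x j : ℕ) : ℤ) - ((y j : ℕ) : ℤ) with hc
  set P : ℂ[X] := ∏ j, (1 + C (gg q (c j)) * X) with hP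
  -- step 1: expansion of P as sum over words
  have h1 : P = ∑ z : Fin n → Fin q,
      C (∏ j, (ww q) ^ (((z j : ℕ) : ℤ) * c j)) *
        X ^ ((Finset.univ.filter (fun j => (z j : ℕ) ≠ 0)).card) := by
    calc P = ∏ j, ∑ a : Fin q, C ((ww q) ^ (((a : ℕ) : ℤ) * c j)) *
          X ^ (if (a : ℕ) = 0 then 0 else 1) :=
        Finset.prod_congr rfl fun j _ => factor_eq q hq0 (c j)
      _ = ∑ z ∈ Fintype.piFinset (fun _ : Fin n => (Finset.univ : Finset (Fin q))),
          ∏ j, C ((ww q) ^ (((z j : ℕ) : ℤ) * c j)) * X ^ (if (z j : ℕ) = 0 then 0 else 1) :=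
        Finset.prod_univ_sum _ _
      _ = _ := by
        rw [Fintype.piFinset_univ]
        refine Finset.sum_congr rfl fun z _ => ?_
        rw [Finset.prod_mul_distrib, ← map_prod,
          Finset.prod_pow_eq_pow_sum Finset.univ (fun j => if (z j : ℕ) = 0 then 0 else 1) X]
        have hwt : (∑ j, if (z j : ℕ) = 0 then 0 else 1) =
            (Finset.univ.filter (fun j => (z j : ℕ) ≠ 0)).card := by
          rw [Finset.card_filter]
          exact Finset.sum_congr rfl fun j _ => by by_cases h : (z j : ℕ) = 0 <;> simp [h]
        rw [hwt]
  -- step 2: LHS is coeff i of P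
  have h2 : P.coeff i = ∑ z ∈ Finset.univ.filter (fun z : Fin n → Fin q =>
      (Finset.univ.filter (fun j => (z j : ℕ) ≠ 0)).card = i),
      ∏ j, (ww q) ^ (((z j : ℕ) : ℤ) * c j) := by
    rw [h1, Polynomial.finset_sum_coeff]
    simp_rw [coeff_C_mul, coeff_X_pow]
    rw [Finset.sum_filter]
    refine Finset.sum_congr rfl fun z _ => ?_
    by_cases h : (Finset.univ.filter (fun j => (z j : ℕ) ≠ 0)).card = i
    · rw [if_pos h, if_pos h.symm, mul_one]
    · rw [if_neg h, if_neg (fun hh => h hh.symm), mul_zero]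
  -- step 3: product form of P
  have hdistcard : d = (Finset.univ.filter (fun j : Fin n => x j ≠ y j)).card := rfl
  have h3 : P = (1 + C ((q : ℂ) - 1) * X) ^ (n - d) * (1 + C (-1 : ℂ) * X) ^ d := by
    rw [hP, ← Finset.prod_filter_mul_prod_filter_not Finset.univ (fun j => x j = y j)]
    congr 1
    · rw [Finset.prod_congr rfl (fun j hj => ?_), Finset.prod_const]
      · congr 1
        have h1' : Finset.univ.filter (fun j : Fin n => x j = y j) =
            Finset.univ.filter (fun j : Fin n => ¬ x j ≠ y j) := by simp
        have h2' := Finset.card_filter_add_card_filter_not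
          (s := (Finset.univ : Finset (Fin n))) (p := fun j : Fin n => x j ≠ y j)
        rw [Finset.card_univ, Fintype.card_fin] at h2'
        rw [h1']
        omega
      · rw [Finset.mem_filter] at hj
        have hcj : c j = 0 := by simp [hc, hj.2]
        rw [hcj, gg_zero hq0]
    · rw [Finset.prod_congr rfl (fun j hj => ?_), Finset.prod_const, hdistcard]
      rw [Finset.mem_filter] at hj
      have hne : (x j : ℕ) ≠ (y j : ℕ) := fun h => hj.2 (Fin.ext h)
      have hnd : ¬ ((q : ℤ) ∣ c j) := by
        intro hdvd
        have habs : |c j| < (q : ℤ) := by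
          have hxj := (x j).isLt
          have hyj := (y j).isLt
          rw [abs_lt]
          constructor <;> · simp only [hc]; omega
        have := Int.eq_zero_of_abs_lt_dvd hdvd habs
        simp only [hc, sub_eq_zero] at this
        exact hne (by exact_mod_cast this)
      rw [gg_neg_one hq0 hnd]
  -- step 4: put it together
  rw [← h2, h3, Polynomial.coeff_mul, Finset.Nat.sum_antidiagonal_eq_sum_range_succ_mk]
  simp_rw [coeff_one_add_C_mul_X_pow]
  rw [kraw_nat n q i d hd]
  push_cast
  rw [← Finset.sum_range_reflect (fun j => (-1 : ℂ) ^ j * ((q : ℂ) - 1) ^ (i - j) *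
    (d.choose j : ℂ) * ((n - d).choose (i - j) : ℂ)) (i + 1)]
  refine Finset.sum_congr rfl fun k hk => ?_
  rw [Finset.mem_range] at hk
  have hki : k ≤ i := by omega
  have h1 : i + 1 - 1 - k = i - k := by omega
  have h2 : i - (i - k) = k := by omega
  rw [h1, h2]
  ring

noncomputable def chi (n q : ℕ) (z x : Fin n → Fin q) : ℂ :=
  ∏ j, (ww q) ^ (((z j : ℕ) : ℤ) * ((x j : ℕ) : ℤ))

lemma conj_ww (q : ℕ) (m : ℤ) :
    (starRingEnd ℂ) ((ww q) ^ m) = (ww q) ^ (-m) := by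
  have h : (starRingEnd ℂ) (ww q) = (ww q)⁻¹ := by
    rw [ww, ← Complex.exp_conj, ← Complex.exp_neg]
    congr 1
    simp only [map_div₀, map_mul, Complex.conj_I, map_ofNat, Complex.conj_ofReal,
      map_natCast]
    ring
  rw [map_zpow₀, h, inv_zpow, ← zpow_neg]

lemma psd (n q i : ℕ) (hq0 : q ≠ 0) (Cc : Finset (Fin n → Fin q)) :
    0 ≤ ∑ x ∈ Cc, ∑ y ∈ Cc, kraw n q i (hammingDist x y) := by
  set filt := Finset.univ.filter (fun z : Fin n → Fin q =>
      (Finset.univ.filter (fun j => (z j : ℕ) ≠ 0)).card = i) with hfilt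
  have key : ((∑ x ∈ Cc, ∑ y ∈ Cc, kraw n q i (hammingDist x y) : ℝ) : ℂ)
      = ((∑ z ∈ filt, Complex.normSq (∑ x ∈ Cc, chi n q z x) : ℝ) : ℂ) := by
    push_cast
    calc (∑ x ∈ Cc, ∑ y ∈ Cc, ((kraw n q i (hammingDist x y) : ℝ) : ℂ))
        = ∑ x ∈ Cc, ∑ y ∈ Cc, ∑ z ∈ filt,
            ∏ j, (ww q) ^ (((z j : ℕ) : ℤ) * (((x j : ℕ) : ℤ) - ((y j : ℕ) : ℤ))) := by
          refine Finset.sum_congr rfl fun x _ => Finset.sum_congr rfl fun y _ => ?_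
          rw [charSum n q hq0 x y i]
      _ = ∑ x ∈ Cc, ∑ z ∈ filt, ∑ y ∈ Cc,
            ∏ j, (ww q) ^ (((z j : ℕ) : ℤ) * (((x j : ℕ) : ℤ) - ((y j : ℕ) : ℤ))) :=
          Finset.sum_congr rfl fun x _ => Finset.sum_comm
      _ = ∑ z ∈ filt, ∑ x ∈ Cc, ∑ y ∈ Cc,
            ∏ j, (ww q) ^ (((z j : ℕ) : ℤ) * (((x j : ℕ) : ℤ) - ((y j : ℕ) : ℤ))) :=
          Finset.sum_comm
      _ = ∑ z ∈ filt, (∑ x ∈ Cc, chi n q z x) *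
            (starRingEnd ℂ) (∑ y ∈ Cc, chi n q z y) := by
          refine Finset.sum_congr rfl fun z _ => ?_
          rw [map_sum, Finset.sum_mul_sum]
          refine Finset.sum_congr rfl fun x _ => Finset.sum_congr rfl fun y _ => ?_
          rw [chi, chi, map_prod, ← Finset.prod_mul_distrib]
          refine Finset.prod_congr rfl fun j _ => ?_
          rw [conj_ww, ← zpow_add₀ (ww_ne_zero q)]
          congr 1
          ring
      _ = ∑ z ∈ filt, (Complex.normSq (∑ x ∈ Cc, chi n q z x) : ℂ) := by
          refine Finset.sum_congr rfl fun z _ => Complex.mul_conj _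
  have := Complex.ofReal_injective key
  rw [this]
  exact Finset.sum_nonneg fun z _ => Complex.normSq_nonneg _

theorem stmt0 (n q m : ℕ) (hn : 2 ≤ n) (hq : 2 ≤ q) (hm : m ≤ n)
    (s : ℝ) (hs : -1 ≤ s) (hs1 : s < 1)
    (f : Polynomial ℝ) (hdeg : f.natDegree = m)
    (F : ℕ → ℝ)
    (hexp : ∀ t : ℝ, f.eval t = ∑ i ∈ Finset.range (m + 1), F i * normKraw n q i t)
    (hA1 : ∀ i : ℕ, i ≤ n → (-1 + 2 * (i : ℝ) / (n : ℝ)) ≤ s →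
      f.eval (-1 + 2 * (i : ℝ) / (n : ℝ)) ≤ 0)
    (hA20 : 0 < F 0) (hA2 : ∀ i : ℕ, i ≤ m → 0 ≤ F i)
    (C : Finset (Fin n → Fin q))
    (hC : ∀ x ∈ C, ∀ y ∈ C, x ≠ y → 1 - 2 * (hammingDist x y : ℝ) / (n : ℝ) ≤ s) :
    (C.card : ℝ) ≤ f.eval 1 / F 0 := by
  have hn0 : (n : ℝ) ≠ 0 := by
    have : 0 < n := by omega
    exact_mod_cast this.ne'
  have hq0 : q ≠ 0 := by omega
  have hq1 : (1 : ℝ) ≤ (q : ℝ) - 1 := by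
    have : (2 : ℝ) ≤ (q : ℝ) := by exact_mod_cast hq
    linarith
  have hr : ∀ i : ℕ, i ≤ n → 0 < ((q : ℝ) - 1) ^ i * (n.choose i : ℝ) := by
    intro i hi
    have h2 := Nat.choose_pos hi
    have : (0 : ℝ) < (n.choose i : ℝ) := by exact_mod_cast h2
    exact mul_pos (pow_pos (by linarith) i) this
  have hdle : ∀ x y : Fin n → Fin q, hammingDist x y ≤ n := by
    intro x y
    simpa using hammingDist_le_card_fintype (x := x) (y := y)
  have hnk : ∀ (i : ℕ) (x y : Fin n → Fin q),
      normKraw n q i (1 - 2 * (hammingDist x y : ℝ) / n) =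
        kraw n q i (hammingDist x y) / (((q : ℝ) - 1) ^ i * (n.choose i : ℝ)) := by
    intro i x y
    have harg : (n : ℝ) * (1 - (1 - 2 * (hammingDist x y : ℝ) / n)) / 2
        = (hammingDist x y : ℝ) := by
      field_simp
      ring
    rw [normKraw, harg]
  have hnk1 : ∀ i : ℕ, i ≤ n → normKraw n q i 1 = 1 := by
    intro i hi
    have harg : (n : ℝ) * (1 - 1) / 2 = 0 := by ring
    rw [normKraw, harg, kraw_at_zero, div_self (ne_of_gt (hr i hi))]
  have hf1 : f.eval 1 = ∑ i ∈ Finset.range (m + 1), F i := by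
    rw [hexp 1]
    refine Finset.sum_congr rfl fun i hi => ?_
    rw [Finset.mem_range] at hi
    rw [hnk1 i (by omega), mul_one]
  have hF0le : F 0 ≤ f.eval 1 := by
    rw [hf1]
    exact Finset.single_le_sum (f := F)
      (fun i hi => hA2 i (by rw [Finset.mem_range] at hi; omega)) (by simp)
  have hf1pos : 0 < f.eval 1 := lt_of_lt_of_le hA20 hF0le
  by_cases hM : C.card = 0
  · rw [hM]
    push_cast
    exact div_nonneg hf1pos.le hA20.le
  set T := ∑ x ∈ C, ∑ y ∈ C, f.eval (1 - 2 * (hammingDist x y : ℝ) / n) with hT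
  have hupper : T ≤ (C.card : ℝ) * f.eval 1 := by
    calc T ≤ ∑ _x ∈ C, f.eval 1 := by
          refine Finset.sum_le_sum fun x hx => ?_
          rw [← Finset.add_sum_erase C _ hx]
          have hxx : (1 : ℝ) - 2 * (hammingDist x x : ℝ) / n = 1 := by
            simp [hammingDist_self]
          rw [hxx]
          have hrest : ∑ y ∈ C.erase x, f.eval (1 - 2 * (hammingDist x y : ℝ) / n) ≤ 0 := by
            refine Finset.sum_nonpos fun y hy => ?_
            have hyC := Finset.mem_of_mem_erase hy
            have hyx : y ≠ x := Finset.ne_of_mem_erase hy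
            have hd := hdle x y
            have heq : (1 : ℝ) - 2 * (hammingDist x y : ℝ) / n
                = -1 + 2 * (((n - hammingDist x y : ℕ)) : ℝ) / n := by
              rw [Nat.cast_sub hd]
              field_simp
              ring
            rw [heq]
            refine hA1 (n - hammingDist x y) (by omega) ?_
            rw [← heq]
            exact hC x hx y hyC (fun h => hyx h.symm)
          linarith
      _ = (C.card : ℝ) * f.eval 1 := by
          rw [Finset.sum_const, nsmul_eq_mul]
  have hlower : F 0 * (C.card : ℝ) ^ 2 ≤ T := by
    have hTeq : T = ∑ i ∈ Finset.range (m + 1),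
        F i * ((∑ x ∈ C, ∑ y ∈ C, kraw n q i (hammingDist x y))
          / (((q : ℝ) - 1) ^ i * (n.choose i : ℝ))) := by
      calc T = ∑ x ∈ C, ∑ y ∈ C, ∑ i ∈ Finset.range (m + 1),
            F i * (kraw n q i (hammingDist x y) / (((q : ℝ) - 1) ^ i * (n.choose i : ℝ))) := by
            refine Finset.sum_congr rfl fun x _ => Finset.sum_congr rfl fun y _ => ?_
            rw [hexp]
            exact Finset.sum_congr rfl fun i _ => by rw [hnk]
        _ = ∑ x ∈ C, ∑ i ∈ Finset.range (m + 1), ∑ y ∈ C,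
            F i * (kraw n q i (hammingDist x y) / (((q : ℝ) - 1) ^ i * (n.choose i : ℝ))) :=
            Finset.sum_congr rfl fun x _ => Finset.sum_comm
        _ = ∑ i ∈ Finset.range (m + 1), ∑ x ∈ C, ∑ y ∈ C,
            F i * (kraw n q i (hammingDist x y) / (((q : ℝ) - 1) ^ i * (n.choose i : ℝ))) :=
            Finset.sum_comm
        _ = _ := by
            refine Finset.sum_congr rfl fun i _ => ?_
            simp_rw [Finset.sum_div, Finset.mul_sum]
    rw [hTeq]
    have h0term : F 0 * ((∑ x ∈ C, ∑ y ∈ C, kraw n q 0 (hammingDist x y))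
        / (((q : ℝ) - 1) ^ 0 * (n.choose 0 : ℝ))) = F 0 * (C.card : ℝ) ^ 2 := by
      simp only [kraw_zero, Finset.sum_const, nsmul_eq_mul, mul_one, pow_zero,
        Nat.choose_zero_right, Nat.cast_one, one_mul, div_one]
      ring
    rw [← h0term]
    refine Finset.single_le_sum (f := fun i => F i * ((∑ x ∈ C, ∑ y ∈ C,
      kraw n q i (hammingDist x y)) / (((q : ℝ) - 1) ^ i * (n.choose i : ℝ))))
      (fun i hi => ?_) (Finset.mem_range.mpr (Nat.succ_pos m))
    rw [Finset.mem_range] at hi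
    have hFi := hA2 i (by omega)
    have hSi := psd n q i hq0 C
    have hri := hr i (by omega)
    exact mul_nonneg hFi (div_nonneg hSi hri.le)
  have hMpos : (0 : ℝ) < (C.card : ℝ) := by
    exact_mod_cast Nat.pos_of_ne_zero hM
  rw [le_div_iff₀ hA20]
  nlinarith [hupper, hlower, hMpos]
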